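/- For the 2×2 matrix X(t) = [[1, g − g⁻¹],[0,1]] with g = g(t) ≥ 1, the largest singular value σ_1(t) satisfies g(t) ≤ σ_1(t) ≤ g(t) + g(t)⁻¹ + 1; consequently if lim_{t→∞}(1/t)·ln g(t) = α ≥ 0 exists, the Lyapunov exponents of X(t) are α and −α, while the Lyapunov characteristic exponents of the columns are 0 and α. -/

import Mathlib

open Matrix Filter

/-- Removed from Mathlib; restated with its old meaning. -/
theorem Matrix.isHermitian_transpose_mul_self {α : Type*} {n : Type*} [Fintype n] [CommSemiring α]
    [StarRing α] [TrivialStar α] (A : Matrix n n α) : (Aᵀ * A).IsHermitian := by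
  simp [Matrix.IsHermitian, Matrix.conjTranspose_mul, Matrix.conjTranspose_eq_transpose_of_trivial]

/-- The k-th largest singular value (0-indexed) of a real square matrix:
square roots of the eigenvalues of `Xᵀ * X`, sorted in decreasing order. -/
noncomputable def svalDesc {n : ℕ} (X : Matrix (Fin n) (Fin n) ℝ) (k : Fin n) : ℝ :=
  Real.sqrt (((Matrix.isHermitian_transpose_mul_self X).eigenvalues ∘
    Tuple.sort ((Matrix.isHermitian_transpose_mul_self X).eigenvalues)) k.rev)

/-- Euclidean norm of the j-th column of X. -/
noncomputable def colNorm {n : ℕ} (X : Matrix (Fin n) (Fin n) ℝ) (j : Fin n) : ℝ :=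
  Real.sqrt (∑ i, (X i j) ^ 2)

/-- Sorting a 2-tuple gives min then max. -/
lemma sortFin2 (f : Fin 2 → ℝ) : (f ∘ Tuple.sort f) 0 = min (f 0) (f 1) ∧
    (f ∘ Tuple.sort f) 1 = max (f 0) (f 1) := by
  have hm := Tuple.monotone_sort f
  have h01 : (f ∘ Tuple.sort f) 0 ≤ (f ∘ Tuple.sort f) 1 := hm (by norm_num)
  set σ := Tuple.sort f with hσ
  have hinj : σ 0 ≠ σ 1 := fun h => by simpa using σ.injective h
  have h0 : σ 0 = 0 ∨ σ 0 = 1 := by omega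
  rcases h0 with h | h
  · have h1 : σ 1 = 1 := by omega
    have e0 : (f ∘ σ) 0 = f 0 := by simp [h]
    have e1 : (f ∘ σ) 1 = f 1 := by simp [h1]
    rw [e0, e1] at h01 ⊢
    exact ⟨(min_eq_left h01).symm, (max_eq_right h01).symm⟩
  · have h1 : σ 1 = 0 := by omega
    have e0 : (f ∘ σ) 0 = f 1 := by simp [h]
    have e1 : (f ∘ σ) 1 = f 0 := by simp [h1]
    rw [e0, e1] at h01 ⊢
    exact ⟨(min_eq_right h01).symm, (max_eq_left h01).symm⟩

/-- The trace of a hermitian real matrix is the sum of its eigenvalues. -/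
lemma traceEig {n : ℕ} (A : Matrix (Fin n) (Fin n) ℝ) (hA : A.IsHermitian) :
    A.trace = ∑ i, hA.eigenvalues i := by
  conv_lhs => rw [hA.spectral_theorem]
  rw [Unitary.conjStarAlgAut_apply, Matrix.trace_mul_cycle]
  simp [Matrix.trace_diagonal]

/-- The singular values of `!![1, g - g⁻¹; 0, 1]` are exactly `g` and `g⁻¹`. -/
lemma svals (g : ℝ) (hg : 1 ≤ g) :
    svalDesc !![(1 : ℝ), g - g⁻¹; 0, 1] 0 = g ∧
    svalDesc !![(1 : ℝ), g - g⁻¹; 0, 1] 1 = g⁻¹ := by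
  have hg0 : 0 < g := lt_of_lt_of_le one_pos hg
  set X : Matrix (Fin 2) (Fin 2) ℝ := !![(1 : ℝ), g - g⁻¹; 0, 1] with hX
  set hA := Matrix.isHermitian_transpose_mul_self X
  set e := hA.eigenvalues with he
  have hdet : e 0 * e 1 = 1 := by
    have h := hA.det_eq_prod_eigenvalues
    have hdX : X.det = 1 := by rw [hX, Matrix.det_fin_two_of]; ring
    rw [Matrix.det_mul, Matrix.det_transpose, hdX] at h
    simpa [Fin.prod_univ_two] using h.symm
  have hXX : Xᴴ * X = !![1, g - g⁻¹; g - g⁻¹, (g - g⁻¹)^2 + 1] := by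
    rw [show Xᴴ = !![(1:ℝ), 0; g - g⁻¹, 1] from by
      ext i j; fin_cases i <;> fin_cases j <;> simp [hX]]
    rw [hX, Matrix.mul_fin_two]; ring_nf
  have htr : e 0 + e 1 = g ^ 2 + (g⁻¹) ^ 2 := by
    have htrv : (Xᴴ * X).trace = 1 + ((g - g⁻¹)^2 + 1) := by
      rw [hXX, Matrix.trace_fin_two_of]
    have h := traceEig _ hA
    rw [Matrix.conjTranspose_eq_transpose_of_trivial] at htrv
    rw [htrv, Fin.sum_univ_two] at h
    rw [show e 0 + e 1 = (1 : ℝ) + ((g - g⁻¹)^2 + 1) from h.symm]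
    field_simp
    ring
  have hnn : ∀ i, 0 ≤ e i := by
    intro i
    have hps : (Xᴴ * X).PosSemidef := Matrix.posSemidef_conjTranspose_mul_self X
    exact hps.eigenvalues_nonneg i
  have hgg : g * g⁻¹ = 1 := mul_inv_cancel₀ hg0.ne'
  have key : ∀ x y : ℝ, x * y = 1 → x + y = g ^ 2 + (g⁻¹) ^ 2 →
      (x - g ^ 2) * (x - (g⁻¹) ^ 2) = 0 := by
    intro x y h1 h2
    linear_combination x * h2 - h1 + (g * g⁻¹ + 1) * hgg
  have hroot : ∀ i : Fin 2, e i = g ^ 2 ∨ e i = (g⁻¹) ^ 2 := by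
    intro i
    have hq : (e i - g ^ 2) * (e i - (g⁻¹) ^ 2) = 0 := by
      fin_cases i
      · exact key (e 0) (e 1) hdet htr
      · exact key (e 1) (e 0) (by rw [mul_comm]; exact hdet) (by rw [add_comm]; exact htr)
    rcases mul_eq_zero.mp hq with h | h
    · left; linarith
    · right; linarith
  have hile : (g⁻¹ : ℝ) ≤ 1 := inv_le_one_of_one_le₀ hg
  have hipos : (0:ℝ) < g⁻¹ := inv_pos.mpr hg0
  have hglei : (g⁻¹) ^ 2 ≤ g ^ 2 := by nlinarith
  have hmaxmin : max (e 0) (e 1) = g ^ 2 ∧ min (e 0) (e 1) = (g⁻¹) ^ 2 := by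
    rcases hroot 0 with h0 | h0 <;> rcases hroot 1 with h1 | h1
    · have hsq : g ^ 2 = 1 := by nlinarith [hdet]
      have hsq' : (g⁻¹) ^ 2 = 1 := by nlinarith [hgg]
      constructor <;> simp [h0, h1, hsq, hsq']
    · constructor
      · rw [max_eq_left (h0 ▸ h1 ▸ hglei), h0]
      · rw [min_eq_right (h0 ▸ h1 ▸ hglei), h1]
    · constructor
      · rw [max_eq_right (h0 ▸ h1 ▸ hglei), h1]
      · rw [min_eq_left (h0 ▸ h1 ▸ hglei), h0]
    · have hsq' : (g⁻¹) ^ 2 = 1 := by nlinarith [hdet]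
      have hsq : g ^ 2 = 1 := by nlinarith [hgg]
      constructor <;> simp [h0, h1, hsq, hsq']
  have hs := sortFin2 e
  constructor
  · show Real.sqrt ((e ∘ Tuple.sort e) (0 : Fin 2).rev) = g
    have hr : ((0 : Fin 2).rev) = 1 := rfl
    rw [hr, hs.2, hmaxmin.1, Real.sqrt_sq hg0.le]
  · show Real.sqrt ((e ∘ Tuple.sort e) (1 : Fin 2).rev) = g⁻¹
    have hr : ((1 : Fin 2).rev) = 0 := rfl
    rw [hr, hs.1, hmaxmin.2, Real.sqrt_sq hipos.le]

/-- If `f` is within a constant factor of `G`, they have the same exponential growth rate. -/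
lemma lim_aux (f G : ℝ → ℝ) (α C : ℝ) (hC : 1 ≤ C)
    (hg1 : ∀ t, 1 ≤ G t) (hlow : ∀ t, G t ≤ C * f t) (hhigh : ∀ t, f t ≤ C * G t)
    (hlim : Tendsto (fun t : ℝ => 1 / t * Real.log (G t)) atTop (nhds α)) :
    Tendsto (fun t : ℝ => 1 / t * Real.log (f t)) atTop (nhds α) := by
  have hC0 : 0 < C := lt_of_lt_of_le one_pos hC
  have hf : ∀ t, 0 < f t := fun t => by nlinarith [hg1 t, hlow t]
  have hlog1 : ∀ t, Real.log (G t) - Real.log C ≤ Real.log (f t) := by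
    intro t
    have h := Real.log_le_log (by linarith [hg1 t]) (hlow t)
    rw [Real.log_mul hC0.ne' (hf t).ne'] at h; linarith
  have hlog2 : ∀ t, Real.log (f t) ≤ Real.log (G t) + Real.log C := by
    intro t
    have h := Real.log_le_log (hf t) (hhigh t)
    rw [Real.log_mul hC0.ne' (by linarith [hg1 t] : G t ≠ 0)] at h; linarith
  have hz : Tendsto (fun t : ℝ => 1 / t * Real.log C) atTop (nhds 0) := by
    have := (tendsto_inv_atTop_zero (𝕜 := ℝ)).mul_const (Real.log C)
    simpa [one_div] using this
  have hlo : Tendsto (fun t : ℝ => 1 / t * Real.log (G t) - 1 / t * Real.log C)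
      atTop (nhds α) := by simpa using hlim.sub hz
  have hhi : Tendsto (fun t : ℝ => 1 / t * Real.log (G t) + 1 / t * Real.log C)
      atTop (nhds α) := by simpa using hlim.add hz
  refine tendsto_of_tendsto_of_tendsto_of_le_of_le' hlo hhi ?_ ?_
  · filter_upwards [eventually_ge_atTop (1 : ℝ)] with t ht
    have ht0 : 0 ≤ 1 / t := by positivity
    have := mul_le_mul_of_nonneg_left (hlog1 t) ht0
    rw [mul_sub] at this; linarith
  · filter_upwards [eventually_ge_atTop (1 : ℝ)] with t ht
    have ht0 : 0 ≤ 1 / t := by positivity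
    have := mul_le_mul_of_nonneg_left (hlog2 t) ht0
    rw [mul_add] at this; linarith

/-- Two-sided bounds for `√((g - g⁻¹)² + 1)`. -/
lemma col1_bounds (g : ℝ) (hg : 1 ≤ g) :
    g ≤ 2 * Real.sqrt ((g - g⁻¹) ^ 2 + 1) ∧ Real.sqrt ((g - g⁻¹) ^ 2 + 1) ≤ 2 * g := by
  have hg0 : 0 < g := lt_of_lt_of_le one_pos hg
  have hgg : g * g⁻¹ = 1 := mul_inv_cancel₀ hg0.ne'
  have hipos : (0:ℝ) < g⁻¹ := inv_pos.mpr hg0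
  constructor
  · have h1 : g ^ 2 ≤ 4 * ((g - g⁻¹) ^ 2 + 1) := by
      nlinarith [sq_nonneg (g^2 - 1), sq_nonneg (g⁻¹)]
    have h2 : Real.sqrt (g ^ 2) ≤ Real.sqrt (4 * ((g - g⁻¹) ^ 2 + 1)) := Real.sqrt_le_sqrt h1
    rw [Real.sqrt_sq hg0.le] at h2
    rw [Real.sqrt_mul (by norm_num : (0:ℝ) ≤ 4),
      show Real.sqrt 4 = 2 by
        rw [show (4:ℝ) = 2^2 by norm_num, Real.sqrt_sq (by norm_num : (0:ℝ) ≤ 2)]] at h2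
    exact h2
  · have h1 : (g - g⁻¹) ^ 2 + 1 ≤ (2 * g) ^ 2 := by nlinarith [sq_nonneg g⁻¹]
    have h2 := Real.sqrt_le_sqrt h1
    rwa [Real.sqrt_sq (by linarith : (0:ℝ) ≤ 2 * g)] at h2

/-- For X(t) = [[1, g − g⁻¹],[0,1]] with g(t) ≥ 1 : g ≤ σ₁ ≤ g + g⁻¹ + 1; hence if
(1/t)·ln g(t) → α ≥ 0 then the Lyapunov exponents are α and −α, while the Lyapunov
characteristic exponents of the columns are 0 and α. -/
theorem example_LE_vs_LCE (g : ℝ → ℝ) (hg : ∀ t, 1 ≤ g t) (α : ℝ) (hα : 0 ≤ α)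
    (hlim : Tendsto (fun t : ℝ => (1 / t) * Real.log (g t)) atTop (nhds α)) :
    (∀ t, g t ≤ svalDesc !![(1 : ℝ), g t - (g t)⁻¹; 0, 1] 0 ∧
      svalDesc !![(1 : ℝ), g t - (g t)⁻¹; 0, 1] 0 ≤ g t + (g t)⁻¹ + 1) ∧
    Tendsto (fun t : ℝ => (1 / t) * Real.log (svalDesc !![(1 : ℝ), g t - (g t)⁻¹; 0, 1] 0))
      atTop (nhds α) ∧
    Tendsto (fun t : ℝ => (1 / t) * Real.log (svalDesc !![(1 : ℝ), g t - (g t)⁻¹; 0, 1] 1))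
      atTop (nhds (-α)) ∧
    Tendsto (fun t : ℝ => (1 / t) * Real.log (colNorm !![(1 : ℝ), g t - (g t)⁻¹; 0, 1] 0))
      atTop (nhds 0) ∧
    Tendsto (fun t : ℝ => (1 / t) * Real.log (colNorm !![(1 : ℝ), g t - (g t)⁻¹; 0, 1] 1))
      atTop (nhds α) := by
  have hS := fun t => svals (g t) (hg t)
  have hgpos : ∀ t, 0 < g t := fun t => lt_of_lt_of_le one_pos (hg t)
  refine ⟨fun t => ?_, ?_, ?_, ?_, ?_⟩
  · rw [(hS t).1]
    have := inv_pos.mpr (hgpos t)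
    exact ⟨le_refl _, by linarith⟩
  · exact hlim.congr fun t => by rw [(hS t).1]
  · exact hlim.neg.congr fun t => by rw [(hS t).2, Real.log_inv]; ring
  · have hc : ∀ t : ℝ, colNorm !![(1 : ℝ), g t - (g t)⁻¹; 0, 1] 0 = 1 := by
      intro t; unfold colNorm; simp [Fin.sum_univ_two]
    exact (tendsto_const_nhds : Tendsto (fun _ : ℝ => (0:ℝ)) atTop (nhds 0)).congr
      fun t => by rw [hc t, Real.log_one, mul_zero]
  · have hc : ∀ t : ℝ, colNorm !![(1 : ℝ), g t - (g t)⁻¹; 0, 1] 1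
        = Real.sqrt ((g t - (g t)⁻¹) ^ 2 + 1) := by
      intro t; unfold colNorm; simp [Fin.sum_univ_two]
    have h := lim_aux (fun t => Real.sqrt ((g t - (g t)⁻¹) ^ 2 + 1)) g α 2 (by norm_num) hg
      (fun t => (col1_bounds (g t) (hg t)).1) (fun t => (col1_bounds (g t) (hg t)).2) hlim
    exact h.congr fun t => by rw [hc t]
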